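/- For any finite family F of N ≥ 1 pairwise non-equivalent formulas, there exists a narrowing set T with |T| ≤ N − 1. -/
import Mathlib

open Classical in
theorem narrowing_aux {α : Type*} (F : Finset (Set α)) :
    ∃ T : Finset α, T.card ≤ F.card - 1 ∧
      ∀ φ ∈ F, ∀ ψ ∈ F, φ ≠ ψ → ∃ I ∈ T, ((I ∈ φ) ↔ (I ∉ ψ)) := by
  classical
  induction F using Finset.strongInduction with
  | _ F ih =>
    by_cases hle : F.card ≤ 1
    · refine ⟨∅, by simp, ?_⟩
      intro φ hφ ψ hψ hne
      exact absurd (Finset.card_le_one.mp hle φ hφ ψ hψ) hne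
    · push_neg at hle
      obtain ⟨φ, hφ, ψ, hψ, hne⟩ := Finset.one_lt_card.mp hle
      have hx : ∃ x, ¬ (x ∈ φ ↔ x ∈ ψ) := by
        by_contra h
        push_neg at h
        exact hne (Set.ext fun x => h x)
      obtain ⟨x, hx⟩ := hx
      set F₁ := F.filter (fun s => x ∈ s) with hF₁
      set F₂ := F.filter (fun s => x ∉ s) with hF₂
      have hsum : F₁.card + F₂.card = F.card :=
        Finset.card_filter_add_card_filter_not (p := fun s => x ∈ s)
      -- one of φ, ψ in F₁, the other in F₂
      have hsub1 : F₁ ⊂ F := by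
        constructor
        · exact Finset.filter_subset _ _
        · intro hs
          by_cases hxφ : x ∈ φ
          · have hxψ : x ∉ ψ := fun h => hx ⟨fun _ => h, fun _ => hxφ⟩
            have := hs hψ
            simp [hF₁, Finset.mem_filter, hxψ] at this
          · have := hs hφ
            simp [hF₁, Finset.mem_filter, hxφ] at this
      have hsub2 : F₂ ⊂ F := by
        constructor
        · exact Finset.filter_subset _ _
        · intro hs
          by_cases hxφ : x ∈ φ
          · have := hs hφ
            simp [hF₂, Finset.mem_filter, hxφ] at this
          · have hxψ : x ∈ ψ := by
              by_contra hxψ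
              exact hx ⟨fun h => absurd h hxφ, fun h => absurd h hxψ⟩
            have := hs hψ
            simp [hF₂, Finset.mem_filter, hxψ] at this
      have hne1 : 1 ≤ F₁.card := by
        rw [Nat.one_le_iff_ne_zero, Ne, Finset.card_eq_zero]
        intro h
        by_cases hxφ : x ∈ φ
        · have : φ ∈ F₁ := Finset.mem_filter.mpr ⟨hφ, hxφ⟩
          simp [h] at this
        · have hxψ : x ∈ ψ := by
            by_contra hxψ
            exact hx ⟨fun h => absurd h hxφ, fun h => absurd h hxψ⟩
          have : ψ ∈ F₁ := Finset.mem_filter.mpr ⟨hψ, hxψ⟩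
          simp [h] at this
      have hne2 : 1 ≤ F₂.card := by
        rw [Nat.one_le_iff_ne_zero, Ne, Finset.card_eq_zero]
        intro h
        by_cases hxφ : x ∈ φ
        · have hxψ : x ∉ ψ := fun hh => hx ⟨fun _ => hh, fun _ => hxφ⟩
          have : ψ ∈ F₂ := Finset.mem_filter.mpr ⟨hψ, hxψ⟩
          simp [h] at this
        · have : φ ∈ F₂ := Finset.mem_filter.mpr ⟨hφ, hxφ⟩
          simp [h] at this
      obtain ⟨T₁, hT₁c, hT₁⟩ := ih F₁ hsub1
      obtain ⟨T₂, hT₂c, hT₂⟩ := ih F₂ hsub2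
      refine ⟨insert x (T₁ ∪ T₂), ?_, ?_⟩
      · calc (insert x (T₁ ∪ T₂)).card ≤ (T₁ ∪ T₂).card + 1 :=
              Finset.card_insert_le _ _
          _ ≤ T₁.card + T₂.card + 1 := by
              have := Finset.card_union_le T₁ T₂; omega
          _ ≤ F.card - 1 := by omega
      · intro a ha b hb hab
        by_cases hxa : x ∈ a <;> by_cases hxb : x ∈ b
        · obtain ⟨I, hI, hIff⟩ := hT₁ a (Finset.mem_filter.mpr ⟨ha, hxa⟩)
            b (Finset.mem_filter.mpr ⟨hb, hxb⟩) hab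
          exact ⟨I, by simp [Finset.mem_insert, hI], hIff⟩
        · exact ⟨x, by simp, ⟨fun _ => hxb, fun _ => hxa⟩⟩
        · exact ⟨x, by simp, ⟨fun h => absurd h hxa, fun h => absurd hxb h⟩⟩
        · obtain ⟨I, hI, hIff⟩ := hT₂ a (Finset.mem_filter.mpr ⟨ha, hxa⟩)
            b (Finset.mem_filter.mpr ⟨hb, hxb⟩) hab
          exact ⟨I, by simp [Finset.mem_insert, hI], hIff⟩

/-- Every family of `N ≥ 1` pairwise non-equivalent formulas admits a narrowing set
of size at most `N - 1`. -/
theorem narrowing_upper_bound {α : Type*} (F : Finset (Set α)) (N : ℕ)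
    (hN : 1 ≤ N) (hcard : F.card = N) :
    ∃ T : Finset α, T.card ≤ N - 1 ∧
      ∀ φ ∈ F, ∀ ψ ∈ F, φ ≠ ψ → ∃ I ∈ T, ((I ∈ φ) ↔ (I ∉ ψ)) := by
  obtain ⟨T, hT, h⟩ := narrowing_aux F
  exact ⟨T, hcard ▸ hT, h⟩
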